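/- For p ∈ (1,∞) and 0 < x < (1 - (2/π_p)^{p(p+1)})^{1/p}, the inequality x / sin_p^{-1}(x) > (1 - x^p)^{1/(p(p+1))} holds, where sin_p^{-1} = F_p. -/

import Mathlib

open Real MeasureTheory

set_option maxHeartbeats 1000000 in
noncomputable def pi_p (p : ℝ) : ℝ := 2 * π / (p * Real.sin (π / p))

noncomputable def Fp (p y : ℝ) : ℝ := ∫ t in (0:ℝ)..y, (1 - t ^ p) ^ (-(1/p) : ℝ)

lemma young_aux {v s : ℝ} (hv0 : 0 < v) (hv1 : v < 1) (hs0 : 0 < s) (hs1 : s < 1) :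
    v ^ s < s * v + (1 - s) := by
  have h := rpow_one_add_lt_one_add_mul_self (s := v - 1) (by linarith) (by
    intro h; apply absurd hv1; simp [sub_eq_zero] at h; simp [h]) hs0 hs1
  have hv : (1 : ℝ) + (v - 1) = v := by ring
  rw [hv] at h
  nlinarith [h]

set_option maxHeartbeats 1000000 in
theorem arcsinp_lower_bound (p : ℝ) (hp : 1 < p) (x : ℝ) (hx0 : 0 < x)
    (hx1 : x < (1 - (2 / pi_p p) ^ (p * (p + 1))) ^ (1/p : ℝ)) :
    (1 - x ^ p) ^ (1 / (p * (p + 1)) : ℝ) < x / Fp p x := by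
  have hp0 : (0:ℝ) < p := by linarith
  have hpp1 : (0:ℝ) < p * (p + 1) := by nlinarith
  set a : ℝ := 1 / (p * (p + 1)) with ha
  have ha0 : 0 < a := by positivity
  -- pi_p p > 2
  have hπ : 2 < pi_p p := by
    have h1 : 0 < π / p := div_pos pi_pos hp0
    have h1' : π / p < π := by
      rw [div_lt_iff₀ hp0]; nlinarith [pi_pos]
    have h2 : 0 < Real.sin (π / p) := Real.sin_pos_of_pos_of_lt_pi h1 h1'
    have h3 : p * Real.sin (π / p) < π := by
      have hlt := Real.sin_lt h1
      calc p * Real.sin (π / p) < p * (π / p) := by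
            exact (mul_lt_mul_iff_right₀ hp0).mpr hlt
        _ = π := by field_simp
    have h4 : 0 < p * Real.sin (π / p) := by positivity
    rw [pi_p, lt_div_iff₀ h4]; linarith
  -- x < 1
  have hq1 : (2 / pi_p p) < 1 := by
    rw [div_lt_one (by linarith)]; linarith
  have hq0 : (0:ℝ) < 2 / pi_p p := by positivity
  have hql : (2 / pi_p p) ^ (p * (p + 1)) < 1 :=
    Real.rpow_lt_one hq0.le hq1 hpp1
  have hqg : (0:ℝ) < (2 / pi_p p) ^ (p * (p + 1)) := Real.rpow_pos_of_pos hq0 _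
  have hx_lt1 : x < 1 := by
    calc x < (1 - (2 / pi_p p) ^ (p * (p + 1))) ^ (1/p : ℝ) := hx1
      _ < 1 := Real.rpow_lt_one (by linarith) (by linarith) (by positivity)
  have hxp1 : x ^ p < 1 := Real.rpow_lt_one hx0.le hx_lt1 hp0
  -- the integrand
  set f : ℝ → ℝ := fun t => (1 - t ^ p) ^ (-(1/p) : ℝ) with hf
  have hFp : ∀ y : ℝ, Fp p y = ∫ t in (0:ℝ)..y, f t := fun y => rfl
  have htp_cont : Continuous fun t : ℝ => 1 - t ^ p := by
    refine continuous_const.sub (continuous_iff_continuousAt.2 fun t => ?_)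
    exact Real.continuousAt_rpow_const t p (Or.inr hp0.le)
  have hne : ∀ t ∈ Set.Icc (0:ℝ) x, 0 < 1 - t ^ p := by
    intro t ht
    have h1 : t ^ p ≤ x ^ p := Real.rpow_le_rpow ht.1 ht.2 hp0.le
    linarith
  have hf_contOn : ContinuousOn f (Set.Icc 0 x) := by
    apply ContinuousOn.rpow_const htp_cont.continuousOn
    intro t ht; exact Or.inl (hne t ht).ne'
  have hf_meas : Measurable f := by
    fun_prop
  have hInt : ∀ y ∈ Set.Icc (0:ℝ) x, IntervalIntegrable f volume 0 y := by
    intro y hy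
    apply ContinuousOn.intervalIntegrable
    rw [Set.uIcc_of_le hy.1]
    exact hf_contOn.mono (Set.Icc_subset_Icc le_rfl hy.2)
  have hf_pos : ∀ t ∈ Set.Icc (0:ℝ) x, 0 < f t := fun t ht =>
    Real.rpow_pos_of_pos (hne t ht) _
  have hFpos : 0 < Fp p x := by
    rw [hFp]
    exact intervalIntegral.intervalIntegral_pos_of_pos_on
      (hInt x ⟨hx0.le, le_rfl⟩)
      (fun t ht => hf_pos t ⟨ht.1.le, ht.2.le⟩) hx0
  -- auxiliary function g
  set g : ℝ → ℝ := fun y => y * (1 - y ^ p) ^ (-a) - Fp p y with hg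
  -- g is continuous on [0, x]
  have hg_cont : ContinuousOn g (Set.Icc 0 x) := by
    apply ContinuousOn.sub
    · exact continuousOn_id.mul (ContinuousOn.rpow_const htp_cont.continuousOn
        (fun t ht => Or.inl (hne t ht).ne'))
    · have hio : IntegrableOn f (Set.uIcc 0 x) volume := by
        rw [Set.uIcc_of_le hx0.le]
        exact hf_contOn.integrableOn_Icc
      have := intervalIntegral.continuousOn_primitive_interval hio
      rw [Set.uIcc_of_le hx0.le] at this
      exact this
  -- derivative of g is positive on (0, x)
  have hg_deriv : ∀ y ∈ Set.Ioo (0:ℝ) x, 0 < deriv g y := by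
    intro y hy
    have hy0 : 0 < y := hy.1
    have hyx : y < x := hy.2
    have hyI : y ∈ Set.Icc (0:ℝ) x := ⟨hy0.le, hyx.le⟩
    have hv0 : 0 < 1 - y ^ p := hne y hyI
    have hyp0 : 0 < y ^ p := Real.rpow_pos_of_pos hy0 _
    have hyp1 : y ^ p < 1 := by linarith
    -- derivative of Fp
    have hFd : HasDerivAt (Fp p) (f y) y := by
      have := intervalIntegral.integral_hasDerivAt_right (hInt y hyI)
        (hf_meas.aestronglyMeasurable.stronglyMeasurableAtFilter)
        (by
          apply ContinuousAt.rpow_const (htp_cont.continuousAt)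
          exact Or.inl hv0.ne')
      exact this
    -- derivative of the first term
    have hpow : HasDerivAt (fun y : ℝ => y ^ p) (p * y ^ (p - 1)) y :=
      Real.hasDerivAt_rpow_const (Or.inl hy0.ne')
    have hbase : HasDerivAt (fun y : ℝ => 1 - y ^ p) (-(p * y ^ (p - 1))) y := by
      have h := (hasDerivAt_const y (1:ℝ)).sub hpow
      rw [zero_sub] at h
      exact h
    have hrp : HasDerivAt (fun y : ℝ => (1 - y ^ p) ^ (-a))
        ((-(p * y ^ (p - 1))) * (-a) * (1 - y ^ p) ^ (-a - 1)) y :=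
      HasDerivAt.rpow_const hbase (Or.inl hv0.ne')
    have hprod : HasDerivAt (fun y : ℝ => y * (1 - y ^ p) ^ (-a))
        (1 * (1 - y ^ p) ^ (-a) +
          y * ((-(p * y ^ (p - 1))) * (-a) * (1 - y ^ p) ^ (-a - 1))) y :=
      (hasDerivAt_id y).mul hrp
    have hgd : HasDerivAt g
        (1 * (1 - y ^ p) ^ (-a) +
          y * ((-(p * y ^ (p - 1))) * (-a) * (1 - y ^ p) ^ (-a - 1)) - f y) y :=
      hprod.sub hFd
    rw [hgd.deriv]
    -- simplify: y * y^(p-1) = y^p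
    have hyy : y * y ^ (p - 1) = y ^ p := by
      rw [← Real.rpow_one_add' hy0.le (by intro h; apply hp0.ne'; linarith)]
      ring_nf
    have hexp : 1 * (1 - y ^ p) ^ (-a) +
        y * ((-(p * y ^ (p - 1))) * (-a) * (1 - y ^ p) ^ (-a - 1))
        = (1 - y ^ p) ^ (-a) + (a * p) * y ^ p * (1 - y ^ p) ^ (-a - 1) := by
      have : y * ((-(p * y ^ (p - 1))) * (-a) * (1 - y ^ p) ^ (-a - 1))
          = (a * p) * (y * y ^ (p - 1)) * (1 - y ^ p) ^ (-a - 1) := by ring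
      rw [this, hyy]; ring
    rw [hexp]
    -- now the key inequality
    set v : ℝ := 1 - y ^ p with hv
    set s : ℝ := p / (p + 1) with hs
    have hs0 : 0 < s := by positivity
    have hs1 : s < 1 := by
      rw [hs, div_lt_one (by linarith)]; linarith
    have hap : a * p = 1 - s := by
      rw [ha, hs]; field_simp; ring
    have hyoung : v ^ s < s * v + (1 - s) := young_aux hv0 (by rw [hv]; linarith) hs0 hs1
    -- f y = v ^ (-(1/p)) ; need v^(-a) + (1-s) y^p v^(-a-1) > v^(-1/p)
    have hsplit : (-(1/p) : ℝ) = -a + (s - 1) := by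
      rw [ha, hs]; field_simp; ring
    have hfv : f y = v ^ (-a : ℝ) * v ^ (s - 1 : ℝ) := by
      rw [hf]; simp only [hv]
      rw [hsplit, Real.rpow_add hv0]
    have hva : (0:ℝ) < v ^ (-a : ℝ) := Real.rpow_pos_of_pos hv0 _
    have hva1 : v ^ (-a - 1 : ℝ) = v ^ (-a : ℝ) * v⁻¹ := by
      rw [sub_eq_add_neg, Real.rpow_add hv0, Real.rpow_neg_one]
    have hvs1 : v ^ (s - 1 : ℝ) = v ^ (s : ℝ) * v⁻¹ := by
      rw [sub_eq_add_neg, Real.rpow_add hv0, Real.rpow_neg_one]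
    rw [hfv, hva1, hvs1, sub_pos]
    have hkey : v ^ (s:ℝ) * v⁻¹ < 1 + (1 - s) * y ^ p * v⁻¹ := by
      rw [← sub_pos]
      have hfac : 1 + (1 - s) * y ^ p * v⁻¹ - v ^ (s:ℝ) * v⁻¹
          = (v + (1 - s) * y ^ p - v ^ (s:ℝ)) * v⁻¹ := by
        field_simp
      rw [hfac]
      apply mul_pos _ (inv_pos.mpr hv0)
      have : v + (1 - s) * y ^ p = s * v + (1 - s) := by
        simp only [hv]; ring
      rw [this]; linarith
    calc v ^ (-a:ℝ) * (v ^ (s:ℝ) * v⁻¹)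
        < v ^ (-a:ℝ) * (1 + (1 - s) * y ^ p * v⁻¹) := by
          exact (mul_lt_mul_iff_right₀ hva).mpr hkey
      _ = v ^ (-a:ℝ) + (1 - s) * y ^ p * (v ^ (-a:ℝ) * v⁻¹) := by ring
      _ = v ^ (-a:ℝ) + (a * p) * y ^ p * (v ^ (-a:ℝ) * v⁻¹) := by rw [hap]
  -- strict monotonicity of g
  have hmono : StrictMonoOn g (Set.Icc 0 x) := by
    apply strictMonoOn_of_deriv_pos (convex_Icc 0 x) hg_cont
    rwa [interior_Icc]
  have hg0 : g 0 = 0 := by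
    simp [hg, hFp, Fp, intervalIntegral.integral_same]
  have hgx : 0 < g x := by
    rw [← hg0]
    exact hmono (Set.left_mem_Icc.2 hx0.le) (Set.right_mem_Icc.2 hx0.le) hx0
  -- conclude
  have hmain : Fp p x < x * (1 - x ^ p) ^ (-a : ℝ) := by
    have h := hgx
    simp only [hg] at h
    linarith
  have hvx0 : 0 < 1 - x ^ p := by linarith
  have hpa : (0:ℝ) < (1 - x ^ p) ^ (a : ℝ) := Real.rpow_pos_of_pos hvx0 _
  rw [lt_div_iff₀ hFpos]
  calc (1 - x ^ p) ^ (a:ℝ) * Fp p x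
      < (1 - x ^ p) ^ (a:ℝ) * (x * (1 - x ^ p) ^ (-a : ℝ)) :=
        (mul_lt_mul_iff_right₀ hpa).mpr hmain
    _ = x * ((1 - x ^ p) ^ (a:ℝ) * (1 - x ^ p) ^ (-a : ℝ)) := by ring
    _ = x := by
        rw [← Real.rpow_add hvx0]
        simp
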